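/- Let f : [0,1] → ℝ be continuous. Then the L²([β,1])-distance between f and the function t ↦ (1−β)^{-1} f((t−β)/(1−β)) tends to 0 as β ↘ 0. -/

import Mathlib

open MeasureTheory Set Filter

/-- For continuous `f : [0,1] → ℝ`, the `L²([β,1])` distance between `f` and
`t ↦ (1-β)⁻¹ f((t-β)/(1-β))` tends to `0` as `β ↘ 0`. -/
theorem l2_dist_reparam_tendsto_zero
    (f : ℝ → ℝ) (hf : ContinuousOn f (Icc (0:ℝ) 1)) :
    Tendsto (fun β => ∫ t in Icc β 1, (f t - (1 - β)⁻¹ * f ((t - β) / (1 - β))) ^ 2)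
      (nhdsWithin 0 (Ioo (0:ℝ) 1)) (nhds 0) := by
  -- bound on f
  obtain ⟨M, hM⟩ := (isCompact_Icc).exists_bound_of_continuousOn hf
  have hM0 : 0 ≤ M := le_trans (norm_nonneg _) (hM 0 ⟨le_refl _, zero_le_one⟩)
  -- uniform continuity
  have huc : UniformContinuousOn f (Icc (0:ℝ) 1) :=
    isCompact_Icc.uniformContinuousOn_of_continuous hf
  rw [Metric.tendsto_nhdsWithin_nhds]
  intro ε hε
  set b : ℝ := Real.sqrt ε / 2 with hb
  have hb0 : 0 < b := by positivity
  obtain ⟨δ₁, hδ₁0, hδ₁⟩ := (Metric.uniformContinuousOn_iff.mp huc) (b / 2) (by positivity)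
  refine ⟨min (δ₁ / 2) (min (1/2) (b / (4 * (M + 1)))), by positivity, ?_⟩
  intro β hβ hd
  rw [Real.dist_eq, sub_zero] at hd
  have hβ0 : 0 < β := hβ.1
  have habs : |β| = β := abs_of_pos hβ0
  rw [habs] at hd
  have hβδ₁ : β < δ₁ / 2 := lt_of_lt_of_le hd (min_le_left _ _)
  have hβhalf : β < 1/2 := lt_of_lt_of_le hd ((min_le_right _ _).trans (min_le_left _ _))
  have hβM : β < b / (4 * (M + 1)) :=
    lt_of_lt_of_le hd ((min_le_right _ _).trans (min_le_right _ _))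
  have h1β : (0:ℝ) < 1 - β := by linarith [hβ.2]
  have h1βhalf : (1:ℝ)/2 ≤ 1 - β := by linarith
  -- pointwise bound
  have key : ∀ t ∈ Icc β 1,
      ‖(f t - (1 - β)⁻¹ * f ((t - β) / (1 - β))) ^ 2‖ ≤ b ^ 2 := by
    intro t ht
    set s : ℝ := (t - β) / (1 - β) with hs
    have hsmem : s ∈ Icc (0:ℝ) 1 := by
      constructor
      · exact div_nonneg (by linarith [ht.1]) h1β.le
      · rw [div_le_one h1β]; linarith [ht.2]
    have htmem : t ∈ Icc (0:ℝ) 1 := ⟨le_trans hβ0.le ht.1, ht.2⟩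
    have hts : |t - s| ≤ 2 * β := by
      have : t - s = β * (1 - t) / (1 - β) := by
        rw [hs, eq_div_iff h1β.ne']
        field_simp
        ring
      rw [this, abs_div, abs_of_pos h1β, div_le_iff₀ h1β]
      have h1 : |β * (1 - t)| ≤ β := by
        rw [abs_mul, abs_of_pos hβ0, abs_of_nonneg (by linarith [ht.2])]
        nlinarith [htmem.1, hβ0.le]
      nlinarith [hβhalf, hβ0.le, h1]
    have hdist : dist t s < δ₁ := by
      rw [Real.dist_eq]; linarith
    have h1 : |f t - f s| < b / 2 := by
      have := hδ₁ t htmem s hsmem hdist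
      rwa [Real.dist_eq] at this
    have h2 : |((1 - β)⁻¹ - 1) * f s| ≤ b / 2 := by
      rw [abs_mul]
      have he : (1 - β)⁻¹ - 1 = β / (1 - β) := by field_simp; ring
      have hcoef : |(1 - β)⁻¹ - 1| ≤ 2 * β := by
        rw [he, abs_div, abs_of_pos hβ0, abs_of_pos h1β, div_le_iff₀ h1β]
        nlinarith [hβ0.le]
      have hfs : |f s| ≤ M := hM s hsmem
      have : |(1 - β)⁻¹ - 1| * |f s| ≤ 2 * β * M :=
        mul_le_mul hcoef hfs (abs_nonneg _) (by linarith [hβ0.le])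
      have hβM' : 2 * β * M ≤ b / 2 := by
        have h4 : (0:ℝ) < 4 * (M + 1) := by positivity
        rw [lt_div_iff₀ h4] at hβM
        nlinarith [hβ0.le]
      linarith
    have hsum : |f t - (1 - β)⁻¹ * f s| ≤ b := by
      have : f t - (1 - β)⁻¹ * f s = (f t - f s) - ((1 - β)⁻¹ - 1) * f s := by ring
      rw [this]
      calc |(f t - f s) - ((1 - β)⁻¹ - 1) * f s|
          ≤ |f t - f s| + |((1 - β)⁻¹ - 1) * f s| := abs_sub _ _
        _ ≤ b := by linarith
    have : ‖(f t - (1 - β)⁻¹ * f s) ^ 2‖ = |f t - (1 - β)⁻¹ * f s| ^ 2 := by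
      rw [Real.norm_eq_abs, sq_abs, abs_pow, sq_abs]
    rw [this]
    exact pow_le_pow_left₀ (abs_nonneg _) hsum 2
  -- bound the integral
  have hfin : volume (Icc β 1) < ⊤ := measure_Icc_lt_top
  have hbound := norm_setIntegral_le_of_norm_le_const hfin key
  rw [Real.dist_eq, sub_zero]
  have hvol : (volume (Icc β 1)).toReal = 1 - β := by
    rw [Real.volume_Icc, ENNReal.toReal_ofReal (by linarith)]
  rw [Real.norm_eq_abs, measureReal_def, hvol] at hbound
  have hb2 : b ^ 2 * (1 - β) ≤ b ^ 2 := by nlinarith [sq_nonneg b, hβ0.le]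
  have hbε : b ^ 2 < ε := by
    rw [hb, div_pow, Real.sq_sqrt hε.le]
    linarith
  calc |∫ t in Icc β 1, (f t - (1 - β)⁻¹ * f ((t - β) / (1 - β))) ^ 2|
      ≤ b ^ 2 * (1 - β) := hbound
    _ ≤ b ^ 2 := hb2
    _ < ε := hbε
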